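/- Assume boldface Π¹₁-determinacy. Let (P_n)_{n<ω} be an infinite level-1 tower and let P = ∪_n P_n. Then P is Π¹₁-wellfounded if and only if there exists an order-preserving function f from (rep(P), <^P) into the countable ordinals that is continuous, i.e., f(v) = sup{f(w) : w <^P v} whenever v ∈ rep(P) has at least one <^P-predecessor but no immediate <^P-predecessor. (This is the equivalence of items (1) and (2) of Martin's theorem on infinite level-1 towers.) -/

import Mathlib

noncomputable section

/-- Brouwer–Kleene strict order on finite sequences, relative to a strict order `lt`
on entries: `s <_BK t` iff `s` properly extends `t`, or at the least position where
both are defined and they differ, the entry of `s` is smaller; `[]` is greatest. -/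
def BKltBy {α : Type*} (lt : α → α → Prop) : List α → List α → Prop
  | [], _ => False
  | _ :: _, [] => True
  | a :: s, b :: t => lt a b ∨ (a = b ∧ BKltBy lt s t)

/-- The Brouwer–Kleene order on finite sequences of natural numbers. -/
def BKlt : List ℕ → List ℕ → Prop := BKltBy (· < ·)

/-- A level-1 tree: a set of nonempty finite sequences of naturals such that whenever
`s⌢(n) ∈ P`: if `s ≠ []` then `s ∈ P`, and `s⌢(m) ∈ P` for every `m < n`. -/
def IsLevel1Tree (P : Set (List ℕ)) : Prop :=
  (∀ s ∈ P, s ≠ []) ∧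
  ∀ (s : List ℕ) (n : ℕ), s ++ [n] ∈ P →
    (s ≠ [] → s ∈ P) ∧ ∀ m < n, s ++ [m] ∈ P

/-- A level-1 tree is regular iff the sequence `(1)` is not in it. -/
def Regular1 (P : Set (List ℕ)) : Prop := ([1] : List ℕ) ∉ P

/-- `P` is Π¹₁-wellfounded: there is no infinite branch through `P`. -/
def Pi11WF (P : Set (List ℕ)) : Prop :=
  ¬ ∃ x : ℕ → ℕ, ∀ n : ℕ, 0 < n → (List.ofFn fun i : Fin n => x i) ∈ P

/-- `rep(P)`: the pair `(p, none)` codes the element `(p)` and `(p, some n)` codes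
`(p, n)`. -/
def Rep1 (P : Set (List ℕ)) : Set (List ℕ × Option ℕ) := {x | x.1 ∈ P}

def optNatLt : Option ℕ → Option ℕ → Prop
  | some n, some m => n < m
  | some _, none => True
  | _, _ => False

/-- The order `<^P` on `rep(P)`. -/
def Rep1lt (x y : List ℕ × Option ℕ) : Prop :=
  BKlt x.1 y.1 ∨ (x.1 = y.1 ∧ optNatLt x.2 y.2)

/-- The first uncountable ordinal. -/
def omega1 : Ordinal := (Cardinal.aleph 1).ord

/-- The tuple `(f p)_{p ∈ P}` respects the level-1 tree `P`: each entry is a countable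
limit ordinal and `p ↦ f p` is order preserving from `(P, <_BK)` to the ordinals. -/
def Respects1 (P : Set (List ℕ)) (f : List ℕ → Ordinal) : Prop :=
  (∀ p ∈ P, f p < omega1 ∧ Order.IsSuccLimit (f p)) ∧
  ∀ p ∈ P, ∀ q ∈ P, BKlt p q → f p < f q

/-- `σ` factors `(P, W)`: `σ(∅) = ∅` and `σ` preserves the Brouwer–Kleene order. -/
def Factors (P W : Set (List ℕ)) (σ : List ℕ → List ℕ) : Prop :=
  σ [] = [] ∧ (∀ p ∈ P, σ p ∈ insert ([] : List ℕ) W) ∧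
  ∀ s ∈ insert ([] : List ℕ) P, ∀ t ∈ insert ([] : List ℕ) P,
    BKlt s t → BKlt (σ s) (σ t)

/-- Partial level ≤1 tree `(P, t)`; `t = none` codes the value `-1`. -/
def IsPartialLevelLe1Tree (P : Set (List ℕ)) (t : Option (List ℕ)) : Prop :=
  P.Finite ∧ IsLevel1Tree P ∧ Regular1 P ∧
  (match t with
   | none => P.Nonempty
   | some s => s ∉ P ∧ IsLevel1Tree (insert s P) ∧ Regular1 (insert s P))

/-- The tuple coded by `f` on `P` together with the value `v` at `t` respects the
partial level ≤1 tree `(P, t)`. -/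
def RespectsP1 (P : Set (List ℕ)) (t : Option (List ℕ)) (f : List ℕ → Ordinal)
    (v : Ordinal) : Prop :=
  match t with
  | none => Respects1 P f ∧ v < Ordinal.omega0
  | some s => Respects1 P f ∧
      Respects1 (insert s P) (fun p => if p = s then v else f p)

/-- A level-2 tree of uniform cofinalities. -/
structure Level2Tree where
  dom : Set (List (List ℕ))
  tr : List (List ℕ) → Set (List ℕ)
  nd : List (List ℕ) → Option (List ℕ)
  nil_mem : [] ∈ dom
  take_mem : ∀ q ∈ dom, ∀ n : ℕ, q.take n ∈ dom
  lvl1 : ∀ q ∈ dom, IsLevel1Tree {a : List ℕ | q ++ [a] ∈ dom}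
  tr_nil : tr [] = ∅
  nd_nil : nd [] = some [0]
  ptree : ∀ q ∈ dom, IsPartialLevelLe1Tree (tr q) (nd q)
  compl : ∀ q ∈ dom, ∀ l : ℕ, l < q.length →
    ∃ s : List ℕ, nd (q.take l) = some s ∧ tr (q.take (l + 1)) = insert s (tr (q.take l))

/-- The node `Q_node(q)`, read as an element of `ℕ^{<ω}`. -/
def Level2Tree.ndVal (Q : Level2Tree) (q : List (List ℕ)) : List ℕ := (Q.nd q).getD []

/-- The interleaved sequence `ᾱ ⊕ q`. -/
def Level2Tree.oplus (Q : Level2Tree) (f : List ℕ → Ordinal) (q : List (List ℕ)) :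
    List (Ordinal × Option (List ℕ)) :=
  (List.range q.length).map fun i => (f (Q.ndVal (q.take i)), some (q.getD i []))

/-- The interleaved sequence `ᾱ ⊕ q⌢(-1)`, where `v` is the entry of the tuple at
the node `Q_node(q)`. -/
def Level2Tree.oplusNeg (Q : Level2Tree) (f : List ℕ → Ordinal) (v : Ordinal)
    (q : List (List ℕ)) : List (Ordinal × Option (List ℕ)) :=
  Q.oplus f q ++ [(v, none)]

def optNodeLt : Option (List ℕ) → Option (List ℕ) → Prop
  | none, some _ => True
  | some s, some t => BKlt s t
  | _, _ => False

def entryLt (x y : Ordinal × Option (List ℕ)) : Prop :=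
  x.1 < y.1 ∨ (x.1 = y.1 ∧ optNodeLt x.2 y.2)

/-- The order `<^{²Q}` on interleaved sequences. -/
def Rep2lt : List (Ordinal × Option (List ℕ)) → List (Ordinal × Option (List ℕ)) → Prop :=
  BKltBy entryLt

/-- `rep(²Q)`. -/
def Level2Tree.rep (Q : Level2Tree) : Set (List (Ordinal × Option (List ℕ))) :=
  {x | (∃ q ∈ Q.dom, ∃ f, Respects1 (Q.tr q) f ∧ x = Q.oplus f q) ∨
       (∃ q ∈ Q.dom, ∃ f v, RespectsP1 (Q.tr q) (Q.nd q) f v ∧ x = Q.oplusNeg f v q)}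

/-- Π¹₂-wellfoundedness of a level-2 tree. -/
def Level2Tree.Pi12WF (Q : Level2Tree) : Prop :=
  (∀ q ∈ Q.dom, Pi11WF {a : List ℕ | q ++ [a] ∈ Q.dom}) ∧
  ∀ y : ℕ → List ℕ, (∀ n : ℕ, (List.ofFn fun i : Fin n => y i) ∈ Q.dom) →
    ¬ Pi11WF (⋃ n : ℕ, Q.tr (List.ofFn fun i : Fin n => y i))

/-- The type of elements of `rep(Q)` for a level ≤2 tree `Q`: `inl` for the level-1
part, `inr` for the level-2 part. -/
abbrev RepLe2Elt := (List ℕ × Option ℕ) ⊕ (List (Ordinal × Option (List ℕ)))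

/-- `rep(Q)` for the level ≤2 tree `Q = (P, Q₂)`. -/
def RepLe2 (P : Set (List ℕ)) (Q : Level2Tree) : Set RepLe2Elt :=
  {x | match x with
       | Sum.inl a => a ∈ Rep1 P
       | Sum.inr b => b ∈ Q.rep}

/-- The order `<^Q` for a level ≤2 tree: the level-1 part comes first. -/
def RepLe2lt : RepLe2Elt → RepLe2Elt → Prop := Sum.Lex Rep1lt Rep2lt

/-- Π¹₂-wellfoundedness of a level ≤2 tree. -/
def Pi12WFle2 (P : Set (List ℕ)) (Q : Level2Tree) : Prop :=
  Pi11WF P ∧ Q.Pi12WF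

/-- The sequence of the first `n` values of `x`. -/
def prefixSeq {α : Type*} (x : ℕ → α) (n : ℕ) : List α := List.ofFn fun i : Fin n => x i

/-- `σ` is a winning strategy for Player I (who plays at even rounds) in the game
with payoff set `A`. -/
def WinningStratI (A : Set (ℕ → ℕ)) (σ : List ℕ → ℕ) : Prop :=
  ∀ x : ℕ → ℕ, (∀ n, x (2 * n) = σ (prefixSeq x (2 * n))) → x ∈ A

/-- `σ` is a winning strategy for Player II (who plays at odd rounds). -/
def WinningStratII (A : Set (ℕ → ℕ)) (σ : List ℕ → ℕ) : Prop :=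
  ∀ x : ℕ → ℕ, (∀ n, x (2 * n + 1) = σ (prefixSeq x (2 * n + 1))) → x ∉ A

/-- The Gale–Stewart game with payoff `A` is determined. -/
def GameDetermined (A : Set (ℕ → ℕ)) : Prop :=
  (∃ σ, WinningStratI A σ) ∨ (∃ σ, WinningStratII A σ)

/-- `A` is analytic: the projection of a closed subset of the plane of Baire space,
i.e., the projection of the set of branches of a set of pairs of finite sequences. -/
def IsAnalytic (A : Set (ℕ → ℕ)) : Prop :=
  ∃ T : Set (List ℕ × List ℕ),
    A = {x | ∃ y : ℕ → ℕ, ∀ n : ℕ, (prefixSeq x n, prefixSeq y n) ∈ T}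

/-- Boldface Π¹₁-determinacy: every game with coanalytic payoff is determined. -/
def BoldfacePi11Determinacy : Prop :=
  ∀ A : Set (ℕ → ℕ), IsAnalytic Aᶜ → GameDetermined A

/-- An infinite level-1 tower. -/
def IsInfLevel1Tower (P : ℕ → Set (List ℕ)) : Prop :=
  ∀ i : ℕ, IsLevel1Tree (P i) ∧ (P i).Finite ∧ (P i).ncard = i ∧
    ∀ j : ℕ, i < j → P i ⊆ P j

/-- `o` is a limit point of the set of ordinals `E`. -/
def IsLimitPtOf (E : Set Ordinal) (o : Ordinal) : Prop :=
  (∃ e ∈ E, e < o) ∧ ∀ b < o, ∃ e ∈ E, b < e ∧ e < o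

/-- `E` is a club in `ω₁`. -/
def IsClubInOmega1 (E : Set Ordinal) : Prop :=
  (∀ o ∈ E, o < omega1) ∧
  (∀ o < omega1, ∃ e ∈ E, o < e) ∧
  ∀ o < omega1, IsLimitPtOf E o → o ∈ E

/-- The tuple coded by `f` lies in `[E]^{P↑}`. -/
def RespectsIn (E : Set Ordinal) (P : Set (List ℕ)) (f : List ℕ → Ordinal) : Prop :=
  Respects1 P f ∧ ∀ p ∈ P, f p ∈ E ∧ IsLimitPtOf E (f p)

/-- The tuple coded by `(f, v)` lies in `[E]^{(P,t)↑}`. -/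
def RespectsPIn (E : Set Ordinal) (P : Set (List ℕ)) (t : Option (List ℕ))
    (f : List ℕ → Ordinal) (v : Ordinal) : Prop :=
  RespectsP1 P t f v ∧ (∀ p ∈ P, f p ∈ E ∧ IsLimitPtOf E (f p)) ∧
  (t ≠ none → v ∈ E)

/-- `rep(²Q) ↾ E`. -/
def Level2Tree.repRestrict (Q : Level2Tree) (E : Set Ordinal) :
    Set (List (Ordinal × Option (List ℕ))) :=
  {x | (∃ q ∈ Q.dom, ∃ f, RespectsIn E (Q.tr q) f ∧ x = Q.oplus f q) ∨
       (∃ q ∈ Q.dom, ∃ f v, RespectsPIn E (Q.tr q) (Q.nd q) f v ∧ x = Q.oplusNeg f v q)}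

/-- `rep(Q) ↾ E` for a level ≤2 tree `Q = (P, Q₂)`. -/
def RepLe2Restrict (P : Set (List ℕ)) (Q : Level2Tree) (E : Set Ordinal) :
    Set RepLe2Elt :=
  {x | match x with
       | Sum.inl a => a ∈ Rep1 P
       | Sum.inr b => b ∈ Q.repRestrict E}

/-- `C` is a closed subset of `X` in the order topology of the strict linear order
`lt` on `X`: `C` contains all of its one-sided limit points in `X`. -/
def OrderClosedIn {σ : Type*} (lt : σ → σ → Prop) (X C : Set σ) : Prop :=
  (∀ v ∈ X, (∃ w ∈ C, lt w v) →
      (∀ w ∈ X, lt w v → ∃ u ∈ C, lt w u ∧ lt u v) → v ∈ C) ∧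
  (∀ v ∈ X, (∃ w ∈ C, lt v w) →
      (∀ w ∈ X, lt v w → ∃ u ∈ C, lt v u ∧ lt u w) → v ∈ C)

end

section Stmt7Aux

lemma bk_ne_nil {s t : List ℕ} (h : BKlt s t) : s ≠ [] := by
  cases s with
  | nil => exact absurd h (by simp [BKlt, BKltBy])
  | cons a s => simp

lemma bk_cons_cons {a b : ℕ} {s t : List ℕ} :
    BKlt (a :: s) (b :: t) ↔ a < b ∨ (a = b ∧ BKlt s t) := Iff.rfl

lemma bk_trichot : ∀ s t : List ℕ, BKlt s t ∨ s = t ∨ BKlt t s := by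
  intro s
  induction s with
  | nil =>
    intro t
    cases t with
    | nil => exact Or.inr (Or.inl rfl)
    | cons b t => exact Or.inr (Or.inr trivial)
  | cons a s ih =>
    intro t
    cases t with
    | nil => exact Or.inl trivial
    | cons b t =>
      rcases Nat.lt_trichotomy a b with h | h | h
      · exact Or.inl (Or.inl h)
      · subst h
        rcases ih t with h | h | h
        · exact Or.inl (Or.inr ⟨rfl, h⟩)
        · exact Or.inr (Or.inl (by rw [h]))
        · exact Or.inr (Or.inr (Or.inr ⟨rfl, h⟩))
      · exact Or.inr (Or.inr (Or.inl h))

lemma bk_trans : ∀ s t u : List ℕ, BKlt s t → BKlt t u → BKlt s u := by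
  intro s
  induction s with
  | nil => intro t u h1 _; exact absurd h1 (by simp [BKlt, BKltBy])
  | cons a s ih =>
    intro t u h1 h2
    cases t with
    | nil => exact absurd h2 (by simp [BKlt, BKltBy])
    | cons b t =>
      cases u with
      | nil => trivial
      | cons c u =>
        rcases (bk_cons_cons.1 h1) with hab | ⟨hab, hst⟩ <;>
          rcases (bk_cons_cons.1 h2) with hbc | ⟨hbc, htu⟩
        · exact Or.inl (lt_trans hab hbc)
        · exact Or.inl (hbc ▸ hab)
        · exact Or.inl (hab ▸ hbc)
        · exact Or.inr ⟨hab.trans hbc, ih t u hst htu⟩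

lemma bk_irrefl : ∀ s : List ℕ, ¬ BKlt s s := by
  intro s
  induction s with
  | nil => exact fun h => absurd h (by simp [BKlt, BKltBy])
  | cons a s ih =>
    rintro (h | ⟨-, h⟩)
    · exact lt_irrefl _ h
    · exact ih h

lemma bk_append : ∀ (s l : List ℕ), l ≠ [] → BKlt (s ++ l) s := by
  intro s
  induction s with
  | nil =>
    intro l hl
    cases l with
    | nil => exact absurd rfl hl
    | cons a l => trivial
  | cons a s ih => intro l hl; exact Or.inr ⟨rfl, ih l hl⟩

lemma tree_prefix {U : Set (List ℕ)} (hU : IsLevel1Tree U) :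
    ∀ (l q : List ℕ), q ≠ [] → q ++ l ∈ U → q ∈ U := by
  intro l
  induction l using List.reverseRecOn with
  | nil => intro q _ h; simpa using h
  | append_singleton l a ih =>
    intro q hq h
    rw [← List.append_assoc] at h
    have h2 := (hU.2 (q ++ l) a h).1 (by simp [hq])
    exact ih q hq h2

lemma optNatLt_wf : WellFounded optNatLt := by
  have h1 : ∀ n, Acc optNatLt (some n) := by
    intro n
    induction n using Nat.strong_induction_on with
    | _ n ihn =>
      constructor
      rintro (_ | m) h
      · exact absurd h (by simp [optNatLt])
      · exact ihn m h
  constructor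
  rintro (_ | n)
  · constructor
    rintro (_ | m) h
    · exact absurd h (by simp [optNatLt])
    · exact h1 m
  · exact h1 n

lemma kb_step (t : ℕ → List ℕ) (h1 : ∀ n, t n ≠ []) (h2 : ∀ n, BKlt (t (n + 1)) (t n)) :
    ∃ (a : ℕ) (t' : ℕ → List ℕ), (∀ n, t' n ≠ []) ∧ (∀ n, BKlt (t' (n + 1)) (t' n)) ∧
      (∀ n, ∃ m, a :: t' n = t m) := by
  have hd : ∀ n, ∃ a s, t n = a :: s := fun n => List.exists_cons_of_ne_nil (h1 n)
  choose A S hAS using hd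
  have hA : ∀ n, A (n + 1) ≤ A n := by
    intro n
    have h := h2 n
    rw [hAS, hAS] at h
    rcases bk_cons_cons.1 h with h | h
    · exact le_of_lt h
    · exact le_of_eq h.1
  have hanti : Antitone A := antitone_nat_of_succ_le hA
  obtain ⟨N, hN⟩ : ∃ N, ∀ n, A N ≤ A n := by
    obtain ⟨N, hN⟩ := Nat.sInf_mem (Set.range_nonempty A)
    exact ⟨N, fun n => hN ▸ Nat.sInf_le ⟨n, rfl⟩⟩
  have hconst : ∀ n, N ≤ n → A n = A N := fun n hn => le_antisymm (hanti hn) (hN n)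
  have heq : ∀ n, t (N + n + 2) = A N :: S (N + n + 2) := by
    intro n
    rw [hAS, hconst (N + n + 2) (by omega)]
  refine ⟨A N, fun n => S (N + n + 2), ?_, ?_, ?_⟩
  · intro n
    have h := h2 (N + n + 1)
    have e : N + n + 1 + 1 = N + n + 2 := by omega
    rw [e, heq n, hAS (N + n + 1), hconst (N + n + 1) (by omega)] at h
    rcases bk_cons_cons.1 h with h | h
    · exact absurd h (lt_irrefl _)
    · exact bk_ne_nil h.2
  · intro n
    have h := h2 (N + n + 2)
    have e : N + n + 2 + 1 = N + (n + 1) + 2 := by omega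
    rw [e, heq n, heq (n + 1)] at h
    rcases bk_cons_cons.1 h with h | h
    · exact absurd h (lt_irrefl _)
    · exact h.2
  · intro n
    exact ⟨N + n + 2, (heq n).symm⟩

lemma kb_branch (t : ℕ → List ℕ) (h1 : ∀ n, t n ≠ []) (h2 : ∀ n, BKlt (t (n + 1)) (t n)) :
    ∃ x : ℕ → ℕ, ∀ k, ∃ m l, (List.ofFn fun i : Fin k => x i) ++ l = t m := by
  classical
  let T := {u : ℕ → List ℕ // (∀ n, u n ≠ []) ∧ ∀ n, BKlt (u (n + 1)) (u n)}
  have hstep : ∀ u : T, ∃ (a : ℕ) (u' : T), ∀ n, ∃ m, a :: u'.1 n = u.1 m := by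
    rintro ⟨u, hu1, hu2⟩
    obtain ⟨a, u', h1', h2', h3'⟩ := kb_step u hu1 hu2
    exact ⟨a, ⟨u', h1', h2'⟩, h3'⟩
  choose A next hnext using hstep
  let seq : ℕ → T := fun k => Nat.rec ⟨t, h1, h2⟩ (fun _ p => next p) k
  have hseq : ∀ k, seq (k + 1) = next (seq k) := fun k => rfl
  have key : ∀ k n, ∃ m, (List.ofFn fun i : Fin k => A (seq i)) ++ (seq k).1 n = t m := by
    intro k
    induction k with
    | zero => intro n; exact ⟨n, by simp only [List.ofFn_zero, List.nil_append]; rfl⟩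
    | succ k ih =>
      intro n
      obtain ⟨m', hm'⟩ := hnext (seq k) n
      obtain ⟨m, hm⟩ := ih m'
      refine ⟨m, ?_⟩
      have hofn : (List.ofFn fun i : Fin (k + 1) => A (seq i)) =
          (List.ofFn fun i : Fin k => A (seq i)) ++ [A (seq k)] := by
        rw [List.ofFn_succ']
        simp [List.concat_eq_append]
      rw [hofn, List.append_assoc, List.singleton_append, hseq k, hm', hm]
  refine ⟨fun k => A (seq k), fun k => ?_⟩
  obtain ⟨m, hm⟩ := key k 0
  exact ⟨m, (seq k).1 0, hm⟩

end Stmt7Aux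

/-- Assume boldface Π¹₁-determinacy. Let `(P_n)` be an infinite level-1
tower and `P = ⋃ P_n`. Then `P` is Π¹₁-wellfounded iff there is an order preserving,
continuous function from `(rep(P), <^P)` into the countable ordinals. -/
theorem stmt7 (hdet : BoldfacePi11Determinacy) (P : ℕ → Set (List ℕ))
    (hT : IsInfLevel1Tower P) :
    Pi11WF (⋃ n, P n) ↔
      ∃ f : List ℕ × Option ℕ → Ordinal,
        (∀ v ∈ Rep1 (⋃ n, P n), f v < omega1) ∧
        (∀ v ∈ Rep1 (⋃ n, P n), ∀ w ∈ Rep1 (⋃ n, P n), Rep1lt v w → f v < f w) ∧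
        (∀ v ∈ Rep1 (⋃ n, P n),
          (∃ w ∈ Rep1 (⋃ n, P n), Rep1lt w v) →
          (¬ ∃ w ∈ Rep1 (⋃ n, P n), Rep1lt w v ∧
              ∀ u ∈ Rep1 (⋃ n, P n), ¬ (Rep1lt w u ∧ Rep1lt u v)) →
          f v = sSup (f '' {w ∈ Rep1 (⋃ n, P n) | Rep1lt w v})) := by
    classical
  set U := ⋃ n, P n with hUdef
  have hUtree : IsLevel1Tree U := by
    constructor
    · intro s hs
      rw [hUdef, Set.mem_iUnion] at hs
      obtain ⟨i, hi⟩ := hs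
      exact (hT i).1.1 s hi
    · intro s n hs
      rw [hUdef, Set.mem_iUnion] at hs
      obtain ⟨i, hi⟩ := hs
      obtain ⟨hh1, hh2⟩ := (hT i).1.2 s n hi
      exact ⟨fun h => Set.mem_iUnion.2 ⟨i, hh1 h⟩,
        fun m hm => Set.mem_iUnion.2 ⟨i, hh2 m hm⟩⟩
  constructor
  · intro hwf
    -- BKlt is well-founded on U
    have hbkwf : WellFounded (fun a b : {p // p ∈ U} => BKlt a.1 b.1) := by
      haveI : IsStrictOrder {p // p ∈ U} (fun a b : {p // p ∈ U} => BKlt a.1 b.1) :=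
        { irrefl := fun a => bk_irrefl a.1
          trans := fun a b c h1 h2 => bk_trans _ _ _ h1 h2 }
      rw [RelEmbedding.wellFounded_iff_isEmpty]
      refine ⟨fun g => ?_⟩
      have hdesc : ∀ n, BKlt ((g (n + 1)).1) ((g n).1) := by
        intro n
        exact g.map_rel_iff.2 (Nat.lt_succ_self n)
      have hne : ∀ n, ((g n).1 : List ℕ) ≠ [] := fun n => hUtree.1 _ (g n).2
      obtain ⟨x, hx⟩ := kb_branch (fun n => (g n).1) hne hdesc
      refine hwf ⟨x, fun n hn => ?_⟩
      obtain ⟨m, l, hml⟩ := hx n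
      refine tree_prefix hUtree l _ ?_ (hml ▸ (g m).2)
      have hlen : (List.ofFn fun i : Fin n => x i).length = n := by simp
      intro hc
      rw [hc] at hlen
      simp at hlen
      omega
    -- the rep order is well-founded
    have hwfr : WellFounded
        (fun a b : {v : List ℕ × Option ℕ // v ∈ Rep1 U} => Rep1lt a.1 b.1) := by
      have hlex := hbkwf.prod_lex optNatLt_wf
      refine Subrelation.wf (r := InvImage (Prod.Lex
          (fun a b : {p // p ∈ U} => BKlt a.1 b.1) optNatLt)
          (fun a => (⟨a.1.1, a.2⟩, a.1.2))) ?_ (InvImage.wf _ hlex)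
      rintro a b (h | ⟨h1, h2⟩)
      · exact Prod.lex_def.2 (Or.inl h)
      · exact Prod.lex_def.2 (Or.inr ⟨Subtype.ext h1, h2⟩)
    letI : IsWellOrder {v : List ℕ × Option ℕ // v ∈ Rep1 U}
        (fun a b => Rep1lt a.1 b.1) :=
      { trichotomous := by
          intro a' b' hab' hba'
          have key : ∀ a b : {v : List ℕ × Option ℕ // v ∈ Rep1 U},
              Rep1lt a.1 b.1 ∨ a = b ∨ Rep1lt b.1 a.1 := by
            rintro ⟨⟨p, o⟩, hp⟩ ⟨⟨q, o'⟩, hq⟩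
            rcases bk_trichot p q with h | h | h
            · exact Or.inl (Or.inl h)
            · subst h
              have htr : optNatLt o o' ∨ o = o' ∨ optNatLt o' o := by
                match o, o' with
                | some n, some m =>
                  rcases Nat.lt_trichotomy n m with h | h | h
                  · exact Or.inl h
                  · exact Or.inr (Or.inl (by rw [h]))
                  · exact Or.inr (Or.inr h)
                | some n, none => exact Or.inl trivial
                | none, some m => exact Or.inr (Or.inr trivial)
                | none, none => exact Or.inr (Or.inl rfl)
              rcases htr with h | h | h
              · exact Or.inl (Or.inr ⟨rfl, h⟩)
              · subst h
                exact Or.inr (Or.inl rfl)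
              · exact Or.inr (Or.inr (Or.inr ⟨rfl, h⟩))
            · exact Or.inr (Or.inr (Or.inl h))
          rcases key a' b' with h | h | h
          · exact absurd h hab'
          · exact h
          · exact absurd h hba'
        wf := hwfr }
    set r : {v : List ℕ × Option ℕ // v ∈ Rep1 U} →
        {v : List ℕ × Option ℕ // v ∈ Rep1 U} → Prop := fun a b => Rep1lt a.1 b.1 with hrdef
    refine ⟨fun v => if h : v ∈ Rep1 U then
      Ordinal.lift.{u_1, 0} (Ordinal.typein r ⟨v, h⟩) else 0, ?_, ?_, ?_⟩
    · intro v hv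
      simp only [dif_pos hv]
      calc Ordinal.lift.{u_1, 0} (Ordinal.typein r ⟨v, hv⟩)
          < Ordinal.lift.{u_1, 0} (Ordinal.type r) :=
            Ordinal.lift_lt.2 (Ordinal.typein_lt_type r _)
        _ < omega1 := by
          rw [omega1, Cardinal.lt_ord, ← Ordinal.lift_card, Ordinal.card_type]
          calc Cardinal.lift.{u_1, 0} (Cardinal.mk {v : List ℕ × Option ℕ // v ∈ Rep1 U})
              ≤ Cardinal.lift.{u_1, 0} Cardinal.aleph0 :=
                Cardinal.lift_le.2 Cardinal.mk_le_aleph0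
            _ = Cardinal.aleph0 := Cardinal.lift_aleph0
            _ < Cardinal.aleph 1 := Cardinal.aleph0_lt_aleph_one
    · intro v hv w hw hvw
      simp only [dif_pos hv, dif_pos hw]
      exact Ordinal.lift_lt.2 ((Ordinal.typein_lt_typein r).2 hvw)
    · intro v hv hex hnim
      push_neg at hnim
      simp only [dif_pos hv]
      set S := ((fun v => if h : v ∈ Rep1 U then
        Ordinal.lift.{u_1, 0} (Ordinal.typein r ⟨v, h⟩) else 0) ''
        {w ∈ Rep1 U | Rep1lt w v}) with hSdef
      have hbdd : BddAbove S := by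
        refine ⟨Ordinal.lift.{u_1, 0} (Ordinal.typein r ⟨v, hv⟩), ?_⟩
        rintro o ⟨w, ⟨hw, hwv⟩, rfl⟩
        simp only [dif_pos hw]
        exact le_of_lt (Ordinal.lift_lt.2 ((Ordinal.typein_lt_typein r).2 hwv))
      obtain ⟨w0, hw0, hw0v⟩ := hex
      have hSne : S.Nonempty := ⟨_, ⟨w0, ⟨hw0, hw0v⟩, rfl⟩⟩
      refine le_antisymm ?_ (csSup_le hSne ?_)
      · by_contra hlt
        rw [not_le] at hlt
        obtain ⟨o₀, ho₀⟩ := Ordinal.mem_range_lift_of_le (le_of_lt hlt)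
        have ho₀v : o₀ < Ordinal.typein r ⟨v, hv⟩ := by
          rw [← Ordinal.lift_lt.{u_1, 0}, ho₀]
          exact hlt
        obtain ⟨u, hu⟩ := Ordinal.typein_surj r (lt_trans ho₀v (Ordinal.typein_lt_type r _))
        have huv : Rep1lt u.1 v := by
          have h := (Ordinal.typein_lt_typein r (a := u) (b := ⟨v, hv⟩)).1 (by rw [hu]; exact ho₀v)
          exact h
        obtain ⟨u', hu'mem, huu', hu'v⟩ := hnim u.1 u.2 huv
        have h1 : (if h : u' ∈ Rep1 U then
            Ordinal.lift.{u_1, 0} (Ordinal.typein r ⟨u', h⟩) else 0) ≤ sSup S :=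
          le_csSup hbdd ⟨u', ⟨hu'mem, hu'v⟩, rfl⟩
        rw [dif_pos hu'mem, ← ho₀, ← hu] at h1
        have h2 : Ordinal.typein r u < Ordinal.typein r ⟨u', hu'mem⟩ :=
          (Ordinal.typein_lt_typein r).2 huu'
        exact absurd h1 (not_le.2 (Ordinal.lift_lt.2 h2))
      · rintro o ⟨w, ⟨hw, hwv⟩, rfl⟩
        simp only [dif_pos hw]
        exact le_of_lt (Ordinal.lift_lt.2 ((Ordinal.typein_lt_typein r).2 hwv))
  · rintro ⟨f, hbd, hmono, hcont⟩ ⟨x, hx⟩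
    have hmem : ∀ n : ℕ, (((List.ofFn fun i : Fin (n + 1) => x i), (none : Option ℕ))) ∈
        Rep1 U := fun n => hx (n + 1) (Nat.succ_pos n)
    have hdec : ∀ n, f ((List.ofFn fun i : Fin (n + 1 + 1) => x i), (none : Option ℕ)) <
        f ((List.ofFn fun i : Fin (n + 1) => x i), (none : Option ℕ)) := by
      intro n
      refine hmono _ (hmem (n + 1)) _ (hmem n) (Or.inl ?_)
      have hofn : (List.ofFn fun i : Fin (n + 1 + 1) => x i) =
          (List.ofFn fun i : Fin (n + 1) => x i) ++ [x (n + 1)] := by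
        rw [List.ofFn_succ']
        simp [List.concat_eq_append]
      rw [hofn]
      exact bk_append _ _ (by simp)
    obtain ⟨o, ⟨n, rfl⟩, hminn⟩ := (wellFounded_lt (α := Ordinal)).has_min
      (Set.range fun n => f ((List.ofFn fun i : Fin (n + 1) => x i), (none : Option ℕ)))
      ⟨_, 0, rfl⟩
    exact hminn _ ⟨n + 1, rfl⟩ (hdec n)
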